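/- Let n, d ≥ 1 be integers, let e₁,...,eₙ be a basis of ℤⁿ, and let V = ⋂_{i∈I} {x ∈ ℚⁿ : φᵢ(x) ≥ aᵢ} for a finite family of linear forms φᵢ : ℚⁿ → ℚ and constants aᵢ ∈ ℚ. Let W be a ℤ-module and f : ℤⁿ → W a function such that for all x in ℤⁿ ∩ int(V), all l ∈ {1,...,n}, and all ε ∈ {±1}: if x + kε·e_l ∈ int(V) for all k ∈ {1,...,d}, then f(x) lies in the ℤ-span of {f(x + kε·e_l) : 1 ≤ k ≤ d}. Then there exists a finite collection (V_j)_{j∈J} of proper affine subspaces of ℚⁿ such that the ℤ-span of {f(x) : x ∈ ℤⁿ ∩ (int(V) \ ⋃_j V_j)} is generated by at most dⁿ elements. -/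

import Mathlib

set_option linter.unusedSectionVars false
set_option linter.unnecessarySimpa false

open scoped BigOperators
open AddSubgroup

namespace Stmt2Aux

abbrev co {N : ℕ} (x : Fin N → ℤ) : Fin N → ℚ := fun i => (x i : ℚ)

def Vset {N : ℕ} {I : Type} (φ : I → ((Fin N → ℚ) →ₗ[ℚ] ℚ)) (a : I → ℚ) : Set (Fin N → ℚ) :=
  ⋂ i, {x | a i ≤ φ i x}

lemma continuous_lin {N : ℕ} (φ : (Fin N → ℚ) →ₗ[ℚ] ℚ) : Continuous φ := by
  classical
  have h : ⇑φ = fun x : Fin N → ℚ => ∑ i : Fin N, x i * φ (fun j => if i = j then 1 else 0) := by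
    funext x
    simpa [smul_eq_mul] using LinearMap.pi_apply_eq_sum_univ φ x
  rw [h]
  exact continuous_finset_sum _ fun i _ => (continuous_apply i).mul continuous_const

lemma mem_interior_of_strict {N : ℕ} {I : Type} [Fintype I]
    (φ : I → ((Fin N → ℚ) →ₗ[ℚ] ℚ)) (a : I → ℚ)
    (h0 : ∀ i, φ i = 0 → a i ≤ 0) {z : Fin N → ℚ}
    (hz : ∀ i, φ i ≠ 0 → a i < φ i z) : z ∈ interior (Vset φ a) := by
  classical
  set O : Set (Fin N → ℚ) := ⋂ i, {x | if φ i = 0 then a i ≤ 0 else a i < φ i x} with hO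
  have hopen : IsOpen O := by
    apply isOpen_iInter_of_finite
    intro i
    by_cases h : φ i = 0
    · simp only [h, if_true]
      by_cases h' : a i ≤ 0
      · simpa [h'] using isOpen_univ
      · simpa [h'] using isOpen_empty
    · simp only [h, if_false]
      exact isOpen_lt continuous_const (continuous_lin (φ i))
  have hsub : O ⊆ Vset φ a := by
    intro x hx
    refine Set.mem_iInter.2 fun i => ?_
    have := Set.mem_iInter.1 hx i
    by_cases h : φ i = 0
    · simp only [h, if_true] at this
      simpa [h] using this
    · simp only [h, if_false] at this
      exact le_of_lt (by simpa using this)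
  have hzO : z ∈ O := by
    refine Set.mem_iInter.2 fun i => ?_
    by_cases h : φ i = 0
    · simp [h, h0 i h]
    · simp [h, hz i h]
  exact interior_mono hsub ((hopen.subset_interior_iff.2 subset_rfl) hzO)


section Step

variable {m : ℕ} (d : ℕ) {I : Type} [Fintype I]
  (φ : I → ((Fin (m+1) → ℚ) →ₗ[ℚ] ℚ)) (a : I → ℚ)

/-- inclusion of the base space -/
def Jm : (Fin m → ℚ) →ₗ[ℚ] (Fin (m+1) → ℚ) where
  toFun b := Fin.cons 0 b
  map_add' b c := by
    funext i
    refine Fin.cases ?_ (fun j => ?_) i <;> simp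
  map_smul' t b := by
    funext i
    refine Fin.cases ?_ (fun j => ?_) i <;> simp

def gam (i : I) : ℚ := φ i (Pi.single 0 1)

def psi (i : I) : (Fin m → ℚ) →ₗ[ℚ] ℚ := (φ i).comp Jm

lemma cons_eq (s : ℚ) (β : Fin m → ℚ) :
    (Fin.cons s β : Fin (m+1) → ℚ) = Jm β + s • (Pi.single (0 : Fin (m+1)) (1:ℚ) : Fin (m+1) → ℚ) := by
  funext i
  refine Fin.cases ?_ (fun j => ?_) i
  · simp [Jm]
  · simp [Jm, Pi.single_apply, Fin.succ_ne_zero]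

lemma phi_cons (i : I) (s : ℚ) (β : Fin m → ℚ) :
    φ i (Fin.cons s β) = psi φ i β + s * gam φ i := by
  rw [cons_eq, map_add, map_smul, smul_eq_mul, psi, gam]
  rfl


def OffT (m d : ℕ) : Type := Option (Fin m × Bool × Fin d)

instance (m d : ℕ) : Inhabited (OffT m d) := ⟨none⟩
noncomputable instance (m d : ℕ) : Fintype (OffT m d) := by
  unfold OffT; infer_instance

def sgZ (e : Bool) : ℤ := if e then 1 else -1

def vecZ {m : ℕ} {d : ℕ} : OffT m d → (Fin m → ℤ)
  | none => 0
  | some (l, e, k) => ((k : ℕ) + 1 : ℤ) • sgZ e • Pi.single l 1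

def vecQ {m d : ℕ} (w : OffT m d) : Fin m → ℚ := co (vecZ w)

lemma co_add {N : ℕ} (x y : Fin N → ℤ) : co (x + y) = co x + co y := by
  funext i; simp [co]

lemma co_cons {N : ℕ} (t : ℤ) (b : Fin N → ℤ) :
    co (Fin.cons t b) = Fin.cons (t : ℚ) (co b) := by
  funext i
  refine Fin.cases ?_ (fun j => ?_) i <;> simp

def lvl (i : I) (w : OffT m d) (β : Fin m → ℚ) : ℚ :=
  (a i - psi φ i (β + vecQ w)) / gam φ i

lemma vecQ_none : vecQ (none : OffT m d) = 0 := by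
  funext i; simp [vecQ, vecZ]

lemma lvl_none (i : I) (β : Fin m → ℚ) :
    lvl d φ a i none β = (a i - psi φ i β) / gam φ i := by
  simp [lvl, vecQ_none]

lemma lvl_shift (i : I) (w : OffT m d) (β : Fin m → ℚ) :
    lvl d φ a i none (β + vecQ w) = lvl d φ a i w β := by
  simp [lvl, vecQ_none]

def Qp : Type := {i : I // 0 < gam φ i}
def Qm : Type := {i : I // gam φ i < 0}
def Z0 : Type := {i : I // gam φ i = 0 ∧ φ i ≠ 0}

noncomputable instance : Fintype (Qp φ) := by unfold Qp; classical exact Subtype.fintype _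
noncomputable instance : Fintype (Qm φ) := by unfold Qm; classical exact Subtype.fintype _
noncomputable instance : Fintype (Z0 φ) := by unfold Z0; classical exact Subtype.fintype _

def JB : Type := ((Qm φ) × (Qp φ) × OffT m d × OffT m d) ⊕ ((Z0 φ) × OffT m d)

noncomputable instance : Fintype (JB d φ) := by unfold JB; infer_instance

def c0 : ℚ := d + 2

noncomputable def phiB : JB d φ → ((Fin m → ℚ) →ₗ[ℚ] ℚ)
  | Sum.inl (i, j, _, _) => (-(gam φ i.1)⁻¹) • psi φ i.1 + (gam φ j.1)⁻¹ • psi φ j.1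
  | Sum.inr (z, _) => psi φ z.1

noncomputable def aB : JB d φ → ℚ
  | Sum.inl (i, j, w, w') =>
      c0 d - (a i.1 - psi φ i.1 (vecQ w)) / gam φ i.1 + (a j.1 - psi φ j.1 (vecQ w')) / gam φ j.1
  | Sum.inr (z, w) => a z.1 + 1 - psi φ z.1 (vecQ w)

lemma VB_pair {β : Fin m → ℚ} (hβ : β ∈ Vset (phiB d φ) (aB d φ a))
    (i : Qm φ) (j : Qp φ) (w w' : OffT m d) :
    c0 d + lvl d φ a j.1 w' β ≤ lvl d φ a i.1 w β := by
  have h := Set.mem_iInter.1 hβ (Sum.inl (i, j, w, w'))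
  simp only [Set.mem_setOf_eq] at h
  have hγi : gam φ i.1 ≠ 0 := ne_of_lt i.2
  have hγj : gam φ j.1 ≠ 0 := ne_of_gt j.2
  have key : lvl d φ a i.1 w β - lvl d φ a j.1 w' β - c0 d
      = phiB d φ (Sum.inl (i,j,w,w')) β - aB d φ a (Sum.inl (i,j,w,w')) := by
    simp only [lvl, phiB, aB, LinearMap.add_apply, LinearMap.smul_apply, smul_eq_mul, map_add]
    field_simp
    ring
  linarith

lemma VB_zero {β : Fin m → ℚ} (hβ : β ∈ Vset (phiB d φ) (aB d φ a))
    (z : Z0 φ) (w : OffT m d) :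
    a z.1 + 1 ≤ psi φ z.1 (β + vecQ w) := by
  have h := Set.mem_iInter.1 hβ (Sum.inr (z, w))
  simp only [Set.mem_setOf_eq, phiB, aB] at h
  have : psi φ z.1 (β + vecQ w) = psi φ z.1 β + psi φ z.1 (vecQ w) := map_add _ _ _
  linarith

open Classical in
noncomputable def s0 (β : Fin m → ℚ) : ℤ :=
  if hp : Nonempty (Qp φ) then
    ⌊((Finset.univ : Finset (Qp φ × OffT m d)).image
        (fun p => lvl d φ a p.1.1 p.2 β)).max'
      (Finset.Nonempty.image (@Finset.univ_nonempty _ _ ⟨(hp.some, none)⟩) _)⌋ + 1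
  else if hm : Nonempty (Qm φ) then
    ⌊((Finset.univ : Finset (Qm φ × OffT m d)).image
        (fun p => lvl d φ a p.1.1 p.2 β)).min'
      (Finset.Nonempty.image (@Finset.univ_nonempty _ _ ⟨(hm.some, none)⟩) _)⌋ - d - 1
  else 0

lemma s0_gt (β : Fin m → ℚ) (j : Qp φ) (w : OffT m d) :
    lvl d φ a j.1 w β < (s0 d φ a β : ℚ) := by
  have hp : Nonempty (Qp φ) := ⟨j⟩
  rw [s0, dif_pos hp]
  set s := ((Finset.univ : Finset (Qp φ × OffT m d)).image (fun p => lvl d φ a p.1.1 p.2 β))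
  have hne : s.Nonempty := Finset.Nonempty.image (@Finset.univ_nonempty _ _ ⟨(hp.some, none)⟩) _
  have hmem : lvl d φ a j.1 w β ∈ s := Finset.mem_image.2 ⟨(j, w), Finset.mem_univ _, rfl⟩
  have h1 : lvl d φ a j.1 w β ≤ s.max' hne := Finset.le_max' _ _ hmem
  have h2 : (s.max' hne : ℚ) < ⌊s.max' hne⌋ + 1 := Int.lt_floor_add_one _
  push_cast
  linarith

lemma s0_add_le (β : Fin m → ℚ) (hβ : β ∈ Vset (phiB d φ) (aB d φ a))
    (i : Qm φ) (w : OffT m d) :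
    (s0 d φ a β : ℚ) + d + 1 ≤ lvl d φ a i.1 w β := by
  classical
  by_cases hp : Nonempty (Qp φ)
  · rw [s0, dif_pos hp]
    have hne : ((Finset.univ : Finset (Qp φ × OffT m d)).image
        (fun p => lvl d φ a p.1.1 p.2 β)).Nonempty :=
      Finset.Nonempty.image (@Finset.univ_nonempty _ _ ⟨(hp.some, none)⟩) _
    obtain ⟨p, -, hpmax⟩ := Finset.mem_image.1 (Finset.max'_mem _ hne)
    have hpair := VB_pair d φ a hβ i p.1 w p.2
    rw [hpmax] at hpair
    have hfl : (⌊((Finset.univ : Finset (Qp φ × OffT m d)).image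
        (fun p => lvl d φ a p.1.1 p.2 β)).max' hne⌋ : ℚ) ≤ _ := Int.floor_le _
    have hc : c0 d = (d : ℚ) + 2 := rfl
    push_cast
    linarith
  · rw [s0, dif_neg hp]
    have hm : Nonempty (Qm φ) := ⟨i⟩
    rw [dif_pos hm]
    have hne : ((Finset.univ : Finset (Qm φ × OffT m d)).image
        (fun p => lvl d φ a p.1.1 p.2 β)).Nonempty :=
      Finset.Nonempty.image (@Finset.univ_nonempty _ _ ⟨(hm.some, none)⟩) _
    have hmem : lvl d φ a i.1 w β ∈ ((Finset.univ : Finset (Qm φ × OffT m d)).image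
        (fun p => lvl d φ a p.1.1 p.2 β)) := Finset.mem_image.2 ⟨(i, w), Finset.mem_univ _, rfl⟩
    have h1 := Finset.min'_le _ _ hmem
    have hfl : (⌊((Finset.univ : Finset (Qm φ × OffT m d)).image
        (fun p => lvl d φ a p.1.1 p.2 β)).min' hne⌋ : ℚ) ≤ _ := Int.floor_le _
    push_cast
    linarith

lemma strict_iff_pos {i : I} (hγ : 0 < gam φ i) (t : ℚ) (β : Fin m → ℚ) :
    a i < φ i (Fin.cons t β) ↔ (a i - psi φ i β) / gam φ i < t := by
  rw [phi_cons, div_lt_iff₀ hγ]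
  constructor <;> intro h <;> nlinarith

lemma strict_iff_neg {i : I} (hγ : gam φ i < 0) (t : ℚ) (β : Fin m → ℚ) :
    a i < φ i (Fin.cons t β) ↔ t < (a i - psi φ i β) / gam φ i := by
  rw [phi_cons, lt_div_iff_of_neg hγ]
  constructor <;> intro h <;> nlinarith

lemma pointOK (h0 : ∀ i, φ i = 0 → a i ≤ 0) (b' : Fin m → ℤ) (t : ℤ)
    (hlow : ∀ j : Qp φ, lvl d φ a j.1 none (co b') < (t : ℚ))
    (hhigh : ∀ i : Qm φ, (t : ℚ) < lvl d φ a i.1 none (co b'))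
    (hz : ∀ z : Z0 φ, a z.1 < psi φ z.1 (co b')) :
    co (Fin.cons t b') ∈ interior (Vset φ a) := by
  rw [co_cons]
  apply mem_interior_of_strict φ a h0
  intro i hφ
  rcases lt_trichotomy (gam φ i) 0 with h | h | h
  · have := hhigh ⟨i, h⟩
    rw [lvl_none] at this
    exact (strict_iff_neg φ a h _ _).2 this
  · have := hz ⟨i, h, hφ⟩
    rw [phi_cons, h, mul_zero, add_zero]
    exact this
  · have := hlow ⟨i, h⟩
    rw [lvl_none] at this
    exact (strict_iff_pos φ a h _ _).2 this


lemma cons_add_single0 (s k ε : ℤ) (b : Fin m → ℤ) :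
    (Fin.cons s b : Fin (m+1) → ℤ) + k • ε • Pi.single (0 : Fin (m+1)) (1:ℤ)
      = Fin.cons (s + k * ε) b := by
  funext i
  refine Fin.cases ?_ (fun j => ?_) i
  · simp [Pi.single_apply, mul_comm]
  · simp [Pi.single_apply, Fin.succ_ne_zero]

lemma cons_add_singleSucc (s k ε : ℤ) (l : Fin m) (b : Fin m → ℤ) :
    (Fin.cons s b : Fin (m+1) → ℤ) + k • ε • Pi.single l.succ (1:ℤ)
      = Fin.cons s (b + k • ε • Pi.single l 1) := by
  funext i
  refine Fin.cases ?_ (fun j => ?_) i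
  · simp [Pi.single_apply, (Fin.succ_ne_zero l).symm]
  · simp [Pi.single_apply, Fin.succ_inj]

lemma vert {W : Type} [AddCommGroup W] {r : ℕ} (hd : 1 ≤ d)
    (F : (Fin (m+1) → ℤ) → Fin r → W)
    (hf : ∀ x : Fin (m+1) → ℤ, co x ∈ interior (Vset φ a) →
      ∀ l : Fin (m+1), ∀ ε : ℤ, (ε = 1 ∨ ε = -1) →
        (∀ k : ℕ, 1 ≤ k → k ≤ d → co (x + (k:ℤ) • ε • Pi.single l 1) ∈ interior (Vset φ a)) →
        ∀ j, F x j ∈ AddSubgroup.closure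
          {w : W | ∃ k : ℕ, 1 ≤ k ∧ k ≤ d ∧ ∃ j', w = F (x + (k:ℤ) • ε • Pi.single l 1) j'})
    (b : Fin m → ℤ) (w₀ : ℤ) :
    ∀ s : ℤ,
      (∀ t : ℤ, min s w₀ ≤ t → t ≤ max s (w₀ + d - 1) →
        co (Fin.cons t b) ∈ interior (Vset φ a)) →
      ∀ j, F (Fin.cons s b) j ∈
        AddSubgroup.closure
          {u : W | ∃ (j' : Fin d) (j₂ : Fin r), u = F (Fin.cons (w₀ + (j' : ℤ)) b) j₂} := by
  have window : ∀ s : ℤ, w₀ ≤ s → s ≤ w₀ + d - 1 → ∀ j : Fin r,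
      F (Fin.cons s b) j ∈ AddSubgroup.closure
        {u : W | ∃ (j' : Fin d) (j₂ : Fin r), u = F (Fin.cons (w₀ + (j' : ℤ)) b) j₂} := by
    intro s hs1 hs2 j
    refine AddSubgroup.subset_closure ⟨⟨(s - w₀).toNat, by omega⟩, j, ?_⟩
    have hv : w₀ + (((⟨(s - w₀).toNat, by omega⟩ : Fin d) : ℕ) : ℤ) = s := by
      simp only [Fin.val_mk]; omega
    rw [hv]
  have key : ∀ n : ℕ, ∀ s : ℤ, w₀ - s ≤ (n:ℤ) → s - (w₀ + d - 1) ≤ (n:ℤ) →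
      (∀ t : ℤ, min s w₀ ≤ t → t ≤ max s (w₀ + d - 1) →
        co (Fin.cons t b) ∈ interior (Vset φ a)) →
      ∀ j, F (Fin.cons s b) j ∈
        AddSubgroup.closure
          {u : W | ∃ (j' : Fin d) (j₂ : Fin r), u = F (Fin.cons (w₀ + (j' : ℤ)) b) j₂} := by
    intro n
    induction n with
    | zero =>
      intro s h1 h2 hall j
      exact window s (by omega) (by omega) j
    | succ n IH =>
      intro s h1 h2 hall j
      by_cases hwin : w₀ ≤ s ∧ s ≤ w₀ + d - 1
      · exact window s hwin.1 hwin.2 j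
      rcases lt_or_ge s w₀ with hlt | hge
      · -- below the window
        have hmin : min s w₀ = s := min_eq_left hlt.le
        have hmax : max s (w₀ + d - 1) = w₀ + d - 1 := max_eq_right (by omega)
        rw [hmin, hmax] at hall
        have hx : co (Fin.cons s b) ∈ interior (Vset φ a) := hall s le_rfl (by omega)
        have hsteps : ∀ k : ℕ, 1 ≤ k → k ≤ d →
            co ((Fin.cons s b : Fin (m+1) → ℤ) + (k:ℤ) • (1:ℤ) • Pi.single 0 1)
              ∈ interior (Vset φ a) := by
          intro k hk1 hk2
          rw [cons_add_single0, mul_one]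
          exact hall (s + k) (by omega) (by omega)
        have H := hf _ hx 0 1 (Or.inl rfl) hsteps j
        have hle : AddSubgroup.closure
            {w : W | ∃ k : ℕ, 1 ≤ k ∧ k ≤ d ∧ ∃ j', w =
              F ((Fin.cons s b : Fin (m+1) → ℤ) + (k:ℤ) • (1:ℤ) • Pi.single 0 1) j'} ≤
            AddSubgroup.closure
              {u : W | ∃ (j' : Fin d) (j₂ : Fin r), u = F (Fin.cons (w₀ + (j' : ℤ)) b) j₂} := by
          rw [AddSubgroup.closure_le]
          rintro u ⟨k, hk1, hk2, j', rfl⟩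
          rw [cons_add_single0, mul_one]
          rcases le_or_gt w₀ (s + k) with hcase | hcase
          · exact window (s + k) hcase (by omega) j'
          · exact IH (s + k) (by omega) (by omega)
              (fun t ht1 ht2 => hall t (by omega) (by omega)) j'
        exact hle H
      · -- above the window
        have hgt : w₀ + d - 1 < s := by omega
        have hmin : min s w₀ = w₀ := min_eq_right (by omega)
        have hmax : max s (w₀ + d - 1) = s := max_eq_left (by omega)
        rw [hmin, hmax] at hall
        have hx : co (Fin.cons s b) ∈ interior (Vset φ a) := hall s (by omega) le_rfl
        have hsteps : ∀ k : ℕ, 1 ≤ k → k ≤ d →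
            co ((Fin.cons s b : Fin (m+1) → ℤ) + (k:ℤ) • (-1:ℤ) • Pi.single 0 1)
              ∈ interior (Vset φ a) := by
          intro k hk1 hk2
          rw [cons_add_single0]
          have : s + (k:ℤ) * (-1) = s - k := by ring
          rw [this]
          exact hall (s - k) (by omega) (by omega)
        have H := hf _ hx 0 (-1) (Or.inr rfl) hsteps j
        have hle : AddSubgroup.closure
            {w : W | ∃ k : ℕ, 1 ≤ k ∧ k ≤ d ∧ ∃ j', w =
              F ((Fin.cons s b : Fin (m+1) → ℤ) + (k:ℤ) • (-1:ℤ) • Pi.single 0 1) j'} ≤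
            AddSubgroup.closure
              {u : W | ∃ (j' : Fin d) (j₂ : Fin r), u = F (Fin.cons (w₀ + (j' : ℤ)) b) j₂} := by
          rw [AddSubgroup.closure_le]
          rintro u ⟨k, hk1, hk2, j', rfl⟩
          rw [cons_add_single0]
          have : s + (k:ℤ) * (-1) = s - k := by ring
          rw [this]
          rcases le_or_gt (s - k) (w₀ + d - 1) with hcase | hcase
          · exact window (s - k) (by omega) hcase j'
          · exact IH (s - k) (by omega) (by omega)
              (fun t ht1 ht2 => hall t (by omega) (by omega)) j'
        exact hle H
  intro s hall j
  exact key ((w₀ - s).toNat + (s - (w₀ + d - 1)).toNat) s (by omega) (by omega) hall j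


lemma co_offset (b : Fin m → ℤ) (l : Fin m) (e : Bool) (kf : Fin d) :
    co (b + (((kf : ℕ) + 1 : ℕ) : ℤ) • sgZ e • Pi.single l 1)
      = co b + vecQ (some (l, e, kf) : OffT m d) := by
  rw [co_add]
  rfl

lemma co_tail {N : ℕ} (x : Fin (N+1) → ℤ) : Fin.tail (co x) = co (Fin.tail x) := rfl

lemma gam_ne_zero_phi {i : I} (h : gam φ i ≠ 0) : φ i ≠ 0 := by
  intro hc
  apply h
  rw [gam, hc]
  rfl

lemma lvl_offset (i : I) (hγ : gam φ i ≠ 0) (w : OffT m d) (β : Fin m → ℚ) :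
    lvl d φ a i w β = lvl d φ a i none β - psi φ i (vecQ w) / gam φ i := by
  rw [lvl, lvl_none, map_add]
  ring

end Step

lemma exists_int_mul (c : ℚ) {q : ℕ} (h : c.den ∣ q) : ∃ z : ℤ, c * q = z := by
  rcases h with ⟨t, rfl⟩
  refine ⟨c.num * t, ?_⟩
  push_cast
  rw [← mul_assoc, Rat.mul_den_eq_num]

lemma lin_denom {N : ℕ} (φ : (Fin N → ℚ) →ₗ[ℚ] ℚ) (x : Fin N → ℤ) :
    ∃ z : ℤ, φ (co x) * ((∏ l, (φ (Pi.single l 1)).den : ℕ) : ℚ) = z := by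
  classical
  have hrep : φ (co x) = ∑ l, (x l : ℚ) * φ (Pi.single l 1) := by
    have := LinearMap.pi_apply_eq_sum_univ φ (co x)
    rw [this]
    refine Finset.sum_congr rfl fun l _ => ?_
    rw [smul_eq_mul]
    congr 2
    funext j
    simp [Pi.single_apply, eq_comm]
  have hz : ∀ l, ∃ z : ℤ, φ (Pi.single l 1) * ((∏ l', (φ (Pi.single l' 1)).den : ℕ) : ℚ) = z :=
    fun l => exists_int_mul _ (Finset.dvd_prod_of_mem _ (Finset.mem_univ l))
  choose zf hzf using hz
  refine ⟨∑ l, x l * zf l, ?_⟩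
  rw [hrep, Finset.sum_mul]
  have hc : ((∑ l, x l * zf l : ℤ) : ℚ) = ∑ l, (x l : ℚ) * (zf l : ℚ) := by
    push_cast; rfl
  rw [hc]
  refine Finset.sum_congr rfl fun l _ => ?_
  rw [mul_assoc, hzf l]


set_option maxHeartbeats 3000000 in
lemma gen (d : ℕ) (hd : 1 ≤ d) (W : Type) [AddCommGroup W] :
    ∀ m r : ℕ, ∀ (I : Type), ∀ (_ : Fintype I), ∀ (φ : I → ((Fin m → ℚ) →ₗ[ℚ] ℚ)) (a : I → ℚ)
      (F : (Fin m → ℤ) → Fin r → W),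
      (∀ x : Fin m → ℤ, co x ∈ interior (Vset φ a) →
        ∀ l : Fin m, ∀ ε : ℤ, (ε = 1 ∨ ε = -1) →
          (∀ k : ℕ, 1 ≤ k → k ≤ d → co (x + (k:ℤ) • ε • Pi.single l 1) ∈ interior (Vset φ a)) →
          ∀ j, F x j ∈ AddSubgroup.closure
            {w : W | ∃ k : ℕ, 1 ≤ k ∧ k ≤ d ∧ ∃ j', w = F (x + (k:ℤ) • ε • Pi.single l 1) j'}) →
      ∃ (mh : ℕ) (Vfam : Fin mh → Set (Fin m → ℚ)),
        (∀ t, ∃ (p : Submodule ℚ (Fin m → ℚ)) (v : Fin m → ℚ),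
          p ≠ ⊤ ∧ Vfam t = (fun y => v + y) '' (p : Set (Fin m → ℚ))) ∧
        ∃ g : Fin (r * d ^ m) → W,
          AddSubgroup.closure
            {w : W | ∃ x : Fin m → ℤ, co x ∈ interior (Vset φ a) ∧
              (∀ t, co x ∉ Vfam t) ∧ ∃ j, w = F x j} ≤
          AddSubgroup.closure (Set.range g) := by
  intro m
  induction m with
  | zero =>
    intro r I _ φ a F _hf
    refine ⟨0, Fin.elim0, fun t => t.elim0,
      fun t => F (fun i => i.elim0) ⟨t.1, by simpa using t.2⟩, ?_⟩
    rw [AddSubgroup.closure_le]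
    rintro w ⟨x, -, -, j, rfl⟩
    have hx : x = fun i => i.elim0 := funext fun i => i.elim0
    subst hx
    exact AddSubgroup.subset_closure ⟨⟨j.1, by simpa using j.2⟩, rfl⟩
  | succ m IH =>
    intro r I instI φ a F hf
    classical
    by_cases h0 : ∀ i, φ i = 0 → a i ≤ 0
    swap
    · push_neg at h0
      obtain ⟨i0, hφ0, ha0⟩ := h0
      refine ⟨0, Fin.elim0, fun t => t.elim0, fun _ => 0, ?_⟩
      rw [AddSubgroup.closure_le]
      rintro w ⟨x, hx, -, -⟩
      exfalso
      have hxV := interior_subset hx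
      have h2 := Set.mem_iInter.1 hxV i0
      rw [Set.mem_setOf_eq, hφ0] at h2
      simp only [LinearMap.zero_apply] at h2
      linarith
    -- main branch
    obtain ⟨Θ, hΘ0, hΘ⟩ : ∃ Θ : ℚ, 0 ≤ Θ ∧ ∀ (i : I) (w : OffT m d),
        |psi φ i (vecQ w)| / |gam φ i| ≤ Θ := by
      obtain ⟨C, hC⟩ := (Set.finite_range (fun p : I × OffT m d =>
        |psi φ p.1 (vecQ p.2)| / |gam φ p.1|)).bddAbove
      exact ⟨max C 0, le_max_right _ _, fun i w =>
        le_trans (hC ⟨(i, w), rfl⟩) (le_max_left _ _)⟩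
    obtain ⟨ΔZ, hΔZ0, hΔZ⟩ : ∃ C : ℚ, 0 ≤ C ∧ ∀ (i : I) (w : OffT m d),
        |psi φ i (vecQ w)| ≤ C := by
      obtain ⟨C, hC⟩ := (Set.finite_range (fun p : I × OffT m d =>
        |psi φ p.1 (vecQ p.2)|)).bddAbove
      exact ⟨max C 0, le_max_right _ _, fun i w =>
        le_trans (hC ⟨(i, w), rfl⟩) (le_max_left _ _)⟩
    obtain ⟨Γ, hΓ1, hΓ⟩ : ∃ Γ : ℚ, 1 ≤ Γ ∧ ∀ i : I, |gam φ i| ≤ Γ := by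
      obtain ⟨C, hC⟩ := (Set.finite_range (fun i : I => |gam φ i|)).bddAbove
      exact ⟨max C 1, le_max_right _ _, fun i =>
        le_trans (hC ⟨i, rfl⟩) (le_max_left _ _)⟩
    have hΓ0 : 0 < Γ := lt_of_lt_of_le one_pos hΓ1
    have hc00 : (0:ℚ) < c0 d := by unfold c0; positivity
    set K : ℚ := c0 d + 2*Θ + 1 with hK
    have hKpos : 0 < K := by rw [hK]; linarith
    set Λ : ℚ := Γ * K + ΔZ + 2 with hΛ
    have hΛpos : 0 < Λ := by rw [hΛ]; nlinarith
    have hΓK : Γ * K ≤ Λ := by rw [hΛ]; linarith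
    have hΔZ2 : ΔZ + 2 ≤ Λ := by rw [hΛ]; nlinarith
    -- the window function G
    set s0f : (Fin m → ℚ) → ℤ := s0 d φ a with hs0f
    set G : (Fin m → ℤ) → Fin (d * r) → W := fun b p =>
      F (Fin.cons (s0f (co b) + (((finProdFinEquiv.symm p).1 : Fin d) : ℤ)) b)
        (finProdFinEquiv.symm p).2 with hGdef
    have hfG : ∀ x : Fin m → ℤ, co x ∈ interior (Vset (phiB d φ) (aB d φ a)) →
        ∀ l : Fin m, ∀ ε : ℤ, (ε = 1 ∨ ε = -1) →
          (∀ k : ℕ, 1 ≤ k → k ≤ d →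
            co (x + (k:ℤ) • ε • Pi.single l 1) ∈ interior (Vset (phiB d φ) (aB d φ a))) →
          ∀ j, G x j ∈ AddSubgroup.closure
            {w : W | ∃ k : ℕ, 1 ≤ k ∧ k ≤ d ∧ ∃ j',
              w = G (x + (k:ℤ) • ε • Pi.single l 1) j'} := by
      intro b hbint l ε hε hsteps p
      have hbVB : co b ∈ Vset (phiB d φ) (aB d φ a) := interior_subset hbint
      have hbkVB : ∀ k : ℕ, 1 ≤ k → k ≤ d →
          co (b + (k:ℤ) • ε • Pi.single l 1) ∈ Vset (phiB d φ) (aB d φ a) :=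
        fun k h1 h2 => interior_subset (hsteps k h1 h2)
      set e : Bool := decide (ε = 1) with he
      have hsgZ : sgZ e = ε := by
        rcases hε with rfl | rfl <;> simp [he, sgZ]
      have hcobk : ∀ k : ℕ, ∀ _h1 : 1 ≤ k, ∀ _h2 : k ≤ d,
          co (b + (k:ℤ) • ε • Pi.single l 1)
            = co b + vecQ (some (l, e, ⟨k-1, by omega⟩) : OffT m d) := by
        intro k h1 h2
        rw [show (k:ℤ) • ε • (Pi.single l 1 : Fin m → ℤ)
            = ((((⟨k-1, by omega⟩ : Fin d) : ℕ) + 1 : ℕ) : ℤ) • sgZ e • Pi.single l 1 by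
          rw [hsgZ]
          congr 1
          simp only [Fin.val_mk]
          omega]
        exact co_offset d b l e ⟨k-1, by omega⟩
      set jd : Fin d := (finProdFinEquiv.symm p).1 with hjd
      set j₂ : Fin r := (finProdFinEquiv.symm p).2 with hj₂
      set s : ℤ := s0f (co b) + (jd : ℤ) with hsdef
      have hjdlt : (jd : ℕ) < d := jd.isLt
      have hjd0 : (0:ℚ) ≤ ((jd : ℕ) : ℚ) := by positivity
      have hjdd : ((jd : ℕ) : ℚ) ≤ (d : ℚ) - 1 := by
        have h9 : (jd:ℕ) + 1 ≤ d := hjdlt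
        have h10 : ((jd:ℕ):ℚ) + 1 ≤ (d:ℚ) := by exact_mod_cast h9
        linarith
      have hs_ge : (s0f (co b) : ℚ) ≤ (s : ℚ) := by
        rw [hsdef]; push_cast; linarith
      have hs_le : (s : ℚ) ≤ (s0f (co b) : ℚ) + d - 1 := by
        rw [hsdef]; push_cast; linarith
      have hWlow : ∀ (q : Qp φ) (w : OffT m d),
          lvl d φ a q.1 w (co b) < (s0f (co b) : ℚ) := fun q w => s0_gt d φ a (co b) q w
      have hWhigh : ∀ (i : Qm φ) (w : OffT m d),
          (s0f (co b) : ℚ) + d + 1 ≤ lvl d φ a i.1 w (co b) :=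
        fun i w => s0_add_le d φ a (co b) hbVB i w
      -- all relevant points are in the interior of V
      have hptsV : ∀ k : ℕ, k ≤ d →
          co (Fin.cons s (b + (k:ℤ) • ε • Pi.single l 1)) ∈ interior (Vset φ a) := by
        intro k hk2
        by_cases hk0 : k = 0
        · subst hk0
          simp only [Nat.cast_zero, zero_smul, add_zero]
          apply pointOK d φ a h0 b s
          · intro q
            exact lt_of_lt_of_le (hWlow q none) hs_ge
          · intro i
            have := hWhigh i none
            linarith
          · intro z
            have := VB_zero d φ a hbVB z none
            rw [vecQ_none, add_zero] at this
            linarith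
        · have h1 : 1 ≤ k := by omega
          apply pointOK d φ a h0 (b + (k:ℤ) • ε • Pi.single l 1) s
          · intro q
            rw [hcobk k h1 hk2, lvl_shift d φ a q.1 (some (l, e, ⟨k-1, by omega⟩)) (co b)]
            exact lt_of_lt_of_le (hWlow q _) hs_ge
          · intro i
            rw [hcobk k h1 hk2, lvl_shift d φ a i.1 (some (l, e, ⟨k-1, by omega⟩)) (co b)]
            have := hWhigh i (some (l, e, ⟨k-1, by omega⟩))
            linarith
          · intro z
            rw [hcobk k h1 hk2]
            have := VB_zero d φ a hbVB z (some (l, e, ⟨k-1, by omega⟩))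
            linarith
      have hx_pt : co (Fin.cons s b) ∈ interior (Vset φ a) := by
        have := hptsV 0 (by omega)
        simpa using this
      have hstepsV : ∀ k : ℕ, 1 ≤ k → k ≤ d →
          co ((Fin.cons s b : Fin (m+1) → ℤ) + (k:ℤ) • ε • Pi.single l.succ 1)
            ∈ interior (Vset φ a) := by
        intro k h1 h2
        rw [cons_add_singleSucc]
        exact hptsV k h2
      have H := hf (Fin.cons s b) hx_pt l.succ ε hε hstepsV j₂
      have hGbp : G b p = F (Fin.cons s b) j₂ := by
        rw [hGdef]
      rw [hGbp]
      have hsub : {w : W | ∃ k : ℕ, 1 ≤ k ∧ k ≤ d ∧ ∃ j', w =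
          F ((Fin.cons s b : Fin (m+1) → ℤ) + (k:ℤ) • ε • Pi.single l.succ 1) j'} ⊆
          (AddSubgroup.closure {w : W | ∃ k : ℕ, 1 ≤ k ∧ k ≤ d ∧ ∃ j',
            w = G (b + (k:ℤ) • ε • Pi.single l 1) j'} : Set W) := by
        rintro u ⟨k, h1, h2, j₂', rfl⟩
        rw [cons_add_singleSucc]
        have hbk_mem : co (b + (k:ℤ) • ε • Pi.single l 1) ∈ Vset (phiB d φ) (aB d φ a) :=
          hbkVB k h1 h2
        have hcobk' := hcobk k h1 h2
        have hall : ∀ t : ℤ,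
            min s (s0f (co (b + (k:ℤ) • ε • Pi.single l 1))) ≤ t →
            t ≤ max s (s0f (co (b + (k:ℤ) • ε • Pi.single l 1)) + d - 1) →
            co (Fin.cons t (b + (k:ℤ) • ε • Pi.single l 1)) ∈ interior (Vset φ a) := by
          intro t ht1 ht2
          apply pointOK d φ a h0 (b + (k:ℤ) • ε • Pi.single l 1) t
          · intro q
            have hlow1 : lvl d φ a q.1 none (co (b + (k:ℤ) • ε • Pi.single l 1)) < (s : ℚ) := by
              rw [hcobk', lvl_shift d φ a q.1 (some (l, e, ⟨k-1, by omega⟩)) (co b)]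
              exact lt_of_lt_of_le (hWlow q _) hs_ge
            have hlow2 : lvl d φ a q.1 none (co (b + (k:ℤ) • ε • Pi.single l 1))
                < ((s0f (co (b + (k:ℤ) • ε • Pi.single l 1)) : ℤ) : ℚ) :=
              s0_gt d φ a _ q none
            have hmin : lvl d φ a q.1 none (co (b + (k:ℤ) • ε • Pi.single l 1))
                < ((min s (s0f (co (b + (k:ℤ) • ε • Pi.single l 1))) : ℤ) : ℚ) := by
              rw [Int.cast_min]
              exact lt_min hlow1 hlow2
            exact lt_of_lt_of_le hmin (by exact_mod_cast ht1)
          · intro i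
            have hh1 : (s : ℚ) < lvl d φ a i.1 none (co (b + (k:ℤ) • ε • Pi.single l 1)) := by
              rw [hcobk', lvl_shift d φ a i.1 (some (l, e, ⟨k-1, by omega⟩)) (co b)]
              have := hWhigh i (some (l, e, ⟨k-1, by omega⟩))
              linarith
            have hh2 : ((s0f (co (b + (k:ℤ) • ε • Pi.single l 1)) + (d:ℤ) - 1 : ℤ) : ℚ)
                < lvl d φ a i.1 none (co (b + (k:ℤ) • ε • Pi.single l 1)) := by
              have := s0_add_le d φ a _ hbk_mem i none
              push_cast
              push_cast at this
              linarith
            have hmax : ((max s (s0f (co (b + (k:ℤ) • ε • Pi.single l 1)) + (d:ℤ) - 1) : ℤ) : ℚ)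
                < lvl d φ a i.1 none (co (b + (k:ℤ) • ε • Pi.single l 1)) := by
              rw [Int.cast_max]
              exact max_lt hh1 hh2
            exact lt_of_le_of_lt (by exact_mod_cast ht2) hmax
          · intro z
            have := VB_zero d φ a hbk_mem z none
            rw [vecQ_none, add_zero] at this
            linarith
        have hv := vert d φ a hd F hf (b + (k:ℤ) • ε • Pi.single l 1)
          (s0f (co (b + (k:ℤ) • ε • Pi.single l 1))) s hall j₂'
        refine (AddSubgroup.closure_le _).2 ?_ hv
        rintro u2 ⟨j2', j3, rfl⟩
        apply AddSubgroup.subset_closure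
        refine ⟨k, h1, h2, finProdFinEquiv (j2', j3), ?_⟩
        rw [hGdef]
        simp only [Equiv.symm_apply_apply]
      exact (AddSubgroup.closure_le _).2 hsub H
    obtain ⟨mhB, VfamB, hPropB, gB, hgB⟩ :=
      IH (d * r) (JB d φ) inferInstance (phiB d φ) (aB d φ a) G hfG
    -- index set for the removed affine subspaces
    set NZ : Type := {i : I // φ i ≠ 0} with hNZ
    set qden : NZ → ℕ := fun i => ∏ l, ((φ i.1) (Pi.single l 1)).den with hqden
    set levels : NZ → Finset ℤ :=
      fun i => Finset.Icc ⌈(qden i : ℚ) * a i.1⌉ ⌊(qden i : ℚ) * (a i.1 + Λ)⌋ with hlevels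
    set κ : Type := Fin mhB ⊕ ((i : NZ) × (levels i)) with hκ
    have instκ : Fintype κ := by rw [hκ]; infer_instance
    set eκ : κ ≃ Fin (Fintype.card κ) := Fintype.equivFin κ with heκ
    set Vfam' : κ → Set (Fin (m+1) → ℚ) := Sum.elim
      (fun t => (fun y : Fin (m+1) → ℚ => Fin.tail y) ⁻¹' (VfamB t))
      (fun p => {y : Fin (m+1) → ℚ | φ p.1.1 y = ((p.2 : ℤ) : ℚ) / (qden p.1 : ℚ)}) with hVfam'
    have hcast : r * d ^ (m+1) = d * r * d ^ m := by ring
    refine ⟨Fintype.card κ, Vfam' ∘ eκ.symm, ?_, fun t => gB (Fin.cast hcast t), ?_⟩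
    · -- properness of the removed affine subspaces
      intro t
      rcases hsplit : eκ.symm t with tb | pr
      · obtain ⟨pB, v, hpB, hVB⟩ := hPropB tb
        refine ⟨pB.comap (LinearMap.funLeft ℚ ℚ (Fin.succ : Fin m → Fin (m+1))),
          Fin.cons 0 v, ?_, ?_⟩
        · intro hc2
          apply hpB
          rw [Submodule.eq_top_iff']
          intro y
          have hy : (Fin.cons 0 y : Fin (m+1) → ℚ)
              ∈ pB.comap (LinearMap.funLeft ℚ ℚ (Fin.succ : Fin m → Fin (m+1))) := by
            rw [hc2]; trivial
          have he : LinearMap.funLeft ℚ ℚ (Fin.succ : Fin m → Fin (m+1))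
              (Fin.cons 0 y : Fin (m+1) → ℚ) = y := by
            funext i
            simp [LinearMap.funLeft]
          rwa [Submodule.mem_comap, he] at hy
        · show Vfam' (eκ.symm t) = _
          rw [hsplit]
          show (fun y : Fin (m+1) → ℚ => Fin.tail y) ⁻¹' (VfamB tb) = _
          rw [hVB]
          ext y
          simp only [Set.mem_preimage, Set.mem_image, SetLike.mem_coe, Submodule.mem_comap]
          constructor
          · rintro ⟨u, hu, huv⟩
            refine ⟨y - Fin.cons 0 v, ?_, by simp⟩
            have he : LinearMap.funLeft ℚ ℚ (Fin.succ : Fin m → Fin (m+1))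
                (y - (Fin.cons 0 v : Fin (m+1) → ℚ)) = u := by
              funext i
              have h5 : v i + u i = y i.succ := congrFun huv i
              simp only [LinearMap.funLeft_apply, Pi.sub_apply, Fin.cons_succ]
              linarith
            rw [he]
            exact hu
          · rintro ⟨z, hz, rfl⟩
            refine ⟨LinearMap.funLeft ℚ ℚ (Fin.succ : Fin m → Fin (m+1)) z, hz, ?_⟩
            funext i
            simp [Fin.tail, LinearMap.funLeft_apply, Fin.cons_succ]
      · have hφp : φ pr.1.1 ≠ 0 := pr.1.2
        obtain ⟨u, hu⟩ := DFunLike.ne_iff.1 hφp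
        have hu0 : φ pr.1.1 u ≠ 0 := by simpa using hu
        refine ⟨LinearMap.ker (φ pr.1.1),
          ((((pr.2 : ℤ) : ℚ) / (qden pr.1 : ℚ)) / φ pr.1.1 u) • u, ?_, ?_⟩
        · rw [Ne, LinearMap.ker_eq_top]; exact hφp
        · show Vfam' (eκ.symm t) = _
          rw [hsplit]
          show {y : Fin (m+1) → ℚ | φ pr.1.1 y = ((pr.2 : ℤ) : ℚ) / (qden pr.1 : ℚ)} = _
          set c : ℚ := ((pr.2 : ℤ) : ℚ) / (qden pr.1 : ℚ) with hc
          ext y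
          simp only [Set.mem_setOf_eq, Set.mem_image, SetLike.mem_coe, LinearMap.mem_ker]
          constructor
          · intro hy
            refine ⟨y - (c / φ pr.1.1 u) • u, ?_, by simp⟩
            rw [map_sub, map_smul, smul_eq_mul, div_mul_cancel₀ _ hu0, hy, sub_self]
          · rintro ⟨z, hz, rfl⟩
            rw [map_add, map_smul, smul_eq_mul, div_mul_cancel₀ _ hu0, hz, add_zero]
    · -- the span inclusion
      rw [AddSubgroup.closure_le]
      rintro w ⟨x, hx, hoff, j, rfl⟩
      set b : Fin m → ℤ := Fin.tail x with hb
      set s : ℤ := x 0 with hs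
      have hxcons : Fin.cons s b = x := Fin.cons_self_tail x
      have hcox : co x = Fin.cons ((s : ℤ) : ℚ) (co b) := by
        conv_lhs => rw [← hxcons]
        rw [co_cons]
      have hxV : co x ∈ Vset φ a := interior_subset hx
      have hdeep : ∀ i : I, φ i ≠ 0 → a i + Λ < φ i (co x) := by
        intro i hφi
        by_contra hle
        push_neg at hle
        obtain ⟨z, hzeq⟩ := lin_denom (φ i) x
        have hqpos : (0:ℚ) < (qden ⟨i, hφi⟩ : ℚ) := by
          have h1 : 0 < qden ⟨i, hφi⟩ := by
            rw [hqden]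
            exact Finset.prod_pos fun l _ => (φ i (Pi.single l 1)).pos
          exact_mod_cast h1
        have haix : a i ≤ φ i (co x) := Set.mem_iInter.1 hxV i
        have hzq : φ i (co x) = (z : ℚ) / (qden ⟨i, hφi⟩ : ℚ) := by
          rw [eq_div_iff (ne_of_gt hqpos)]
          rw [hqden]
          exact_mod_cast hzeq
        have h1 : ⌈(qden ⟨i, hφi⟩ : ℚ) * a i⌉ ≤ z := by
          apply Int.ceil_le.2
          rw [hzq] at haix
          have := (le_div_iff₀ hqpos).1 haix
          linarith
        have h2 : z ≤ ⌊(qden ⟨i, hφi⟩ : ℚ) * (a i + Λ)⌋ := by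
          apply Int.le_floor.2
          rw [hzq] at hle
          have := (div_le_iff₀ hqpos).1 hle
          linarith
        have hzmem : z ∈ levels ⟨i, hφi⟩ := by
          rw [hlevels]
          exact Finset.mem_Icc.2 ⟨h1, h2⟩
        have hmem : co x ∈ Vfam' (Sum.inr ⟨⟨i, hφi⟩, ⟨z, hzmem⟩⟩) := hzq
        exact hoff (eκ (Sum.inr ⟨⟨i, hφi⟩, ⟨z, hzmem⟩⟩))
          (by simpa [Function.comp, Equiv.symm_apply_apply] using hmem)
      have hKm : ∀ i : Qm φ, (s:ℚ) + K ≤ lvl d φ a i.1 none (co b) := by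
        intro i
        have hγΓ : -(gam φ i.1) ≤ Γ := by
          have h2 := hΓ i.1
          rw [abs_of_neg i.2] at h2
          exact h2
        have hphi := hdeep i.1 (gam_ne_zero_phi φ (ne_of_lt i.2))
        rw [hcox, phi_cons] at hphi
        rw [lvl_none, le_div_iff_of_neg i.2]
        nlinarith [mul_le_mul_of_nonneg_left hγΓ (le_of_lt hKpos), hΓK]
      have hKp : ∀ q : Qp φ, lvl d φ a q.1 none (co b) + K ≤ (s:ℚ) := by
        intro q
        have hγΓ : gam φ q.1 ≤ Γ := by
          have h2 := hΓ q.1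
          rw [abs_of_pos q.2] at h2
          exact h2
        have hphi := hdeep q.1 (gam_ne_zero_phi φ (ne_of_gt q.2))
        rw [hcox, phi_cons] at hphi
        have hdiv : lvl d φ a q.1 none (co b) ≤ (s:ℚ) - K := by
          rw [lvl_none, div_le_iff₀ q.2]
          nlinarith [mul_le_mul_of_nonneg_left hγΓ (le_of_lt hKpos), hΓK]
        linarith
      have hZb : ∀ z : Z0 φ, a z.1 + ΔZ + 2 ≤ psi φ z.1 (co b) := by
        intro z
        have hphi := hdeep z.1 z.2.2
        rw [hcox, phi_cons, z.2.1, mul_zero, add_zero] at hphi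
        linarith
      have hstrictB : ∀ jb : JB d φ, aB d φ a jb < phiB d φ jb (co b) := by
        intro jb
        rcases jb with ⟨i, q, w', w''⟩ | ⟨z, w'⟩
        · have hγi : gam φ i.1 ≠ 0 := ne_of_lt i.2
          have hγq : gam φ q.1 ≠ 0 := ne_of_gt q.2
          have key : lvl d φ a i.1 w' (co b) - lvl d φ a q.1 w'' (co b) - c0 d
              = phiB d φ (Sum.inl (i,q,w',w'')) (co b) - aB d φ a (Sum.inl (i,q,w',w'')) := by
            simp only [lvl, phiB, aB, LinearMap.add_apply, LinearMap.smul_apply, smul_eq_mul,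
              map_add]
            field_simp
            ring
          have e1 := lvl_offset d φ a i.1 hγi w' (co b)
          have e2 := lvl_offset d φ a q.1 hγq w'' (co b)
          have hoffi : |psi φ i.1 (vecQ w') / gam φ i.1| ≤ Θ := by
            rw [abs_div]; exact hΘ i.1 w'
          have hoffq : |psi φ q.1 (vecQ w'') / gam φ q.1| ≤ Θ := by
            rw [abs_div]; exact hΘ q.1 w''
          have hb1 := abs_le.1 hoffi
          have hb2 := abs_le.1 hoffq
          have h1 := hKm i
          have h2 := hKp q
          have hKeq : K = c0 d + 2*Θ + 1 := hK
          linarith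
        · have hphiz := hZb z
          have hw := (abs_le.1 (hΔZ z.1 w')).1
          show aB d φ a (Sum.inr (z, w')) < phiB d φ (Sum.inr (z, w')) (co b)
          simp only [phiB, aB]
          linarith
      have hbVB : co b ∈ Vset (phiB d φ) (aB d φ a) :=
        Set.mem_iInter.2 fun jb => le_of_lt (hstrictB jb)
      have h0B : ∀ jb, phiB d φ jb = 0 → aB d φ a jb ≤ 0 := by
        intro jb hzz
        have h2 := hstrictB jb
        rw [hzz] at h2
        simpa using le_of_lt h2
      have hbB : co b ∈ interior (Vset (phiB d φ) (aB d φ a)) :=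
        mem_interior_of_strict _ _ h0B fun jb _ => hstrictB jb
      have hboff : ∀ t', co b ∉ VfamB t' := by
        intro t' hcon
        apply hoff (eκ (Sum.inl t'))
        have : Fin.tail (co x) ∈ VfamB t' := by
          rw [co_tail]
          exact hcon
        show co x ∈ Vfam' (eκ.symm (eκ (Sum.inl t')))
        rw [Equiv.symm_apply_apply]
        exact this
      have hGmem : ∀ p : Fin (d*r), G b p ∈ AddSubgroup.closure (Set.range gB) :=
        fun p => hgB (AddSubgroup.subset_closure ⟨b, hbB, hboff, p, rfl⟩)
      have hall : ∀ t : ℤ, min s (s0f (co b)) ≤ t → t ≤ max s (s0f (co b) + d - 1) →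
          co (Fin.cons t b) ∈ interior (Vset φ a) := by
        intro t ht1 ht2
        apply pointOK d φ a h0 b t
        · intro q
          have h2 := hKp q
          have h3 := s0_gt d φ a (co b) q none
          have hlt : lvl d φ a q.1 none (co b) < ((min s (s0f (co b)) : ℤ) : ℚ) := by
            push_cast
            exact lt_min (by linarith) (by exact_mod_cast h3)
          exact lt_of_lt_of_le hlt (by exact_mod_cast ht1)
        · intro i
          have h2 := hKm i
          have h3 := s0_add_le d φ a (co b) hbVB i none
          have hlt : ((max s (s0f (co b) + d - 1) : ℤ) : ℚ) < lvl d φ a i.1 none (co b) := by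
            push_cast
            apply max_lt (by linarith)
            push_cast at h3
            linarith
          exact lt_of_le_of_lt (by exact_mod_cast ht2) hlt
        · intro z
          have h2 := hZb z
          linarith
      have hvert := vert d φ a hd F hf b (s0f (co b)) s hall j
      rw [hxcons] at hvert
      have hrange : Set.range (fun t : Fin (r * d^(m+1)) => gB (Fin.cast hcast t))
          = Set.range gB := by
        ext u
        constructor
        · rintro ⟨t, rfl⟩; exact ⟨_, rfl⟩
        · rintro ⟨t, rfl⟩
          exact ⟨Fin.cast hcast.symm t, rfl⟩
      have hsub : {u : W | ∃ (j' : Fin d) (j₂ : Fin r),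
          u = F (Fin.cons (s0f (co b) + ((j' : Fin d) : ℤ)) b) j₂}
          ⊆ (AddSubgroup.closure (Set.range fun t : Fin (r * d^(m+1)) =>
              gB (Fin.cast hcast t)) : Set W) := by
        rintro u ⟨j', j₂, rfl⟩
        have hGp : F (Fin.cons (s0f (co b) + ((j' : Fin d) : ℤ)) b) j₂
            = G b (finProdFinEquiv (j', j₂)) := by
          rw [hGdef]
          simp only [Equiv.symm_apply_apply]
        rw [hGp, hrange]
        exact hGmem (finProdFinEquiv (j', j₂))
      exact (AddSubgroup.closure_le _).2 hsub hvert


lemma co_single {N : ℕ} (l : Fin N) : co (Pi.single l (1:ℤ)) = Pi.single l (1:ℚ) := by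
  funext j
  by_cases h : j = l <;> simp [Pi.single_apply, h]

end Stmt2Aux

open Stmt2Aux

theorem stmt2 (n d : ℕ) (hn : 1 ≤ n) (hd : 1 ≤ d)
    {I : Type} [Fintype I] (φ : I → ((Fin n → ℚ) →ₗ[ℚ] ℚ)) (a : I → ℚ)
    (e : Module.Basis (Fin n) ℤ (Fin n → ℤ))
    (W : Type) [AddCommGroup W] (f : (Fin n → ℤ) → W)
    (V : Set (Fin n → ℚ)) (hV : V = ⋂ i, {x | a i ≤ φ i x})
    (hf : ∀ x : Fin n → ℤ, (fun i => (x i : ℚ)) ∈ interior V →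
      ∀ l : Fin n, ∀ ε : ℤ, (ε = 1 ∨ ε = -1) →
        (∀ k : ℕ, 1 ≤ k → k ≤ d →
          (fun i => (((x + (k : ℤ) • ε • e l) i : ℤ) : ℚ)) ∈ interior V) →
        f x ∈ AddSubgroup.closure
          {w : W | ∃ k : ℕ, 1 ≤ k ∧ k ≤ d ∧ w = f (x + (k : ℤ) • ε • e l)}) :
    ∃ (m : ℕ) (Vfam : Fin m → Set (Fin n → ℚ)),
      (∀ j, ∃ (p : Submodule ℚ (Fin n → ℚ)) (v : Fin n → ℚ),
        p ≠ ⊤ ∧ Vfam j = (fun y => v + y) '' (p : Set (Fin n → ℚ))) ∧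
      ∃ g : Fin (d ^ n) → W,
        AddSubgroup.closure
          {w : W | ∃ x : Fin n → ℤ, (fun i => (x i : ℚ)) ∈ interior V ∧
            (∀ j, (fun i => (x i : ℚ)) ∉ Vfam j) ∧ w = f x} ≤
        AddSubgroup.closure (Set.range g) := by
  classical
  -- rational versions of the change of basis
  set T : (Fin n → ℤ) ≃ₗ[ℤ] (Fin n → ℤ) := e.equivFun.symm with hT
  set TQ : (Fin n → ℚ) →ₗ[ℚ] (Fin n → ℚ) :=
    { toFun := fun y j => ∑ l, y l * ((e l j : ℤ) : ℚ)
      map_add' := by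
        intro y z
        funext j
        simp [add_mul, Finset.sum_add_distrib]
      map_smul' := by
        intro c y
        funext j
        simp [Finset.mul_sum, mul_assoc] } with hTQ
  set A : Fin n → (Fin n → ℤ) := fun l => e.equivFun (fun j => if l = j then 1 else 0) with hA
  set SQ : (Fin n → ℚ) →ₗ[ℚ] (Fin n → ℚ) :=
    { toFun := fun y j => ∑ l, y l * ((A l j : ℤ) : ℚ)
      map_add' := by
        intro y z
        funext j
        simp [add_mul, Finset.sum_add_distrib]
      map_smul' := by
        intro c y
        funext j
        simp [Finset.mul_sum, mul_assoc] } with hSQ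
  have hTco : ∀ x : Fin n → ℤ, co (T x) = TQ (co x) := by
    intro x
    funext j
    have h1 : T x = ∑ i, x i • e i := by
      rw [hT, Module.Basis.equivFun_symm_apply]
    rw [hTQ]
    show ((T x j : ℤ) : ℚ) = ∑ l, (x l : ℚ) * ((e l j : ℤ) : ℚ)
    rw [h1]
    rw [show (∑ i, x i • e i) j = ∑ i, x i * e i j by
      rw [Finset.sum_apply]; simp [smul_eq_mul]]
    push_cast
    rfl
  have hSco : ∀ x : Fin n → ℤ, co (e.equivFun x) = SQ (co x) := by
    intro x
    funext j
    have h1 : e.equivFun x = ∑ l, x l • A l := by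
      conv_lhs => rw [pi_eq_sum_univ x, map_sum]
      refine Finset.sum_congr rfl fun l _ => ?_
      rw [map_smul, hA]
    rw [hSQ]
    show ((e.equivFun x j : ℤ) : ℚ) = ∑ l, (x l : ℚ) * ((A l j : ℤ) : ℚ)
    rw [h1]
    rw [show (∑ l, x l • A l) j = ∑ l, x l * A l j by
      rw [Finset.sum_apply]; simp [smul_eq_mul]]
    push_cast
    rfl
  -- the two maps are inverse to each other
  have hbase : ∀ l : Fin n, Pi.single l (1:ℚ) = co (Pi.single l (1:ℤ)) := fun l =>
    (co_single l).symm
  have hsingle_eq : ∀ l : Fin n, (fun j => if l = j then (1:ℤ) else 0) = Pi.single l 1 := by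
    intro l
    funext j
    by_cases h : j = l <;> simp [Pi.single_apply, h]
    · intro hc; exact h hc.symm
  have hTS : ∀ y, TQ (SQ y) = y := by
    have hcomp : TQ.comp SQ = LinearMap.id := by
      refine Module.Basis.ext (Pi.basisFun ℚ (Fin n)) fun l => ?_
      have hb : (Pi.basisFun ℚ (Fin n)) l = Pi.single l (1:ℚ) := by
        simp [Pi.basisFun_apply]
      rw [hb, hbase l, LinearMap.comp_apply, ← hSco, ← hTco]
      have : T (e.equivFun (Pi.single l (1:ℤ))) = Pi.single l 1 := by
        rw [hT]
        exact e.equivFun.symm_apply_apply _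
      rw [this, LinearMap.id_apply]
    intro y
    exact LinearMap.congr_fun hcomp y
  have hST : ∀ y, SQ (TQ y) = y := by
    have hcomp : SQ.comp TQ = LinearMap.id := by
      refine Module.Basis.ext (Pi.basisFun ℚ (Fin n)) fun l => ?_
      have hb : (Pi.basisFun ℚ (Fin n)) l = Pi.single l (1:ℚ) := by
        simp [Pi.basisFun_apply]
      rw [hb, hbase l, LinearMap.comp_apply, ← hTco, ← hSco]
      have : e.equivFun (T (Pi.single l (1:ℤ))) = Pi.single l 1 := by
        rw [hT]
        exact e.equivFun.apply_symm_apply _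
      rw [this, LinearMap.id_apply]
    intro y
    exact LinearMap.congr_fun hcomp y
  -- homeomorphism
  have hcontT : Continuous TQ := by
    apply continuous_pi
    intro j
    show Continuous fun y : Fin n → ℚ => ∑ l, y l * ((e l j : ℤ) : ℚ)
    apply continuous_finset_sum
    intro l _
    exact (continuous_apply l).mul continuous_const
  have hcontS : Continuous SQ := by
    apply continuous_pi
    intro j
    show Continuous fun y : Fin n → ℚ => ∑ l, y l * ((A l j : ℤ) : ℚ)
    apply continuous_finset_sum
    intro l _
    exact (continuous_apply l).mul continuous_const
  set homeo : Homeomorph (Fin n → ℚ) (Fin n → ℚ) :=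
    { toFun := TQ
      invFun := SQ
      left_inv := hST
      right_inv := hTS
      continuous_toFun := hcontT
      continuous_invFun := hcontS } with hhomeo
  -- primed problem
  set φ' : I → ((Fin n → ℚ) →ₗ[ℚ] ℚ) := fun i => (φ i).comp TQ with hφ'
  set F : (Fin n → ℤ) → Fin 1 → W := fun x _ => f (T x) with hF
  have hVset : Vset φ' a = ⇑TQ ⁻¹' V := by
    rw [hV]
    unfold Vset
    ext y
    simp [hφ']
  have hint : interior (Vset φ' a) = ⇑TQ ⁻¹' (interior V) := by
    rw [hVset]
    exact (homeo.preimage_interior V).symm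
  have hmemint : ∀ x : Fin n → ℤ, co x ∈ interior (Vset φ' a) ↔ co (T x) ∈ interior V := by
    intro x
    rw [hint, Set.mem_preimage, hTco]
  have hf' : ∀ x : Fin n → ℤ, co x ∈ interior (Vset φ' a) →
      ∀ l : Fin n, ∀ ε : ℤ, (ε = 1 ∨ ε = -1) →
        (∀ k : ℕ, 1 ≤ k → k ≤ d →
          co (x + (k:ℤ) • ε • Pi.single l 1) ∈ interior (Vset φ' a)) →
        ∀ j, F x j ∈ AddSubgroup.closure
          {w : W | ∃ k : ℕ, 1 ≤ k ∧ k ≤ d ∧ ∃ j',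
            w = F (x + (k:ℤ) • ε • Pi.single l 1) j'} := by
    intro x hx l ε hε hsteps j
    have hTstep : ∀ k : ℕ, T (x + (k:ℤ) • ε • Pi.single l 1) = T x + (k:ℤ) • ε • e l := by
      intro k
      rw [map_add, map_smul, map_smul]
      congr 2
      rw [hT, ← hsingle_eq l, Module.Basis.equivFun_symm_apply]
      simp
    have hx2 : (fun i => ((T x) i : ℚ)) ∈ interior V := (hmemint x).1 hx
    have hsteps2 : ∀ k : ℕ, 1 ≤ k → k ≤ d →
        (fun i => (((T x + (k:ℤ) • ε • e l) i : ℤ) : ℚ)) ∈ interior V := by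
      intro k h1 h2
      rw [← hTstep k]
      exact (hmemint _).1 (hsteps k h1 h2)
    have H := hf (T x) hx2 l ε hε hsteps2
    have hseteq : {w : W | ∃ k : ℕ, 1 ≤ k ∧ k ≤ d ∧ w = f (T x + (k:ℤ) • ε • e l)}
        = {w : W | ∃ k : ℕ, 1 ≤ k ∧ k ≤ d ∧ ∃ j',
            w = F (x + (k:ℤ) • ε • Pi.single l 1) j'} := by
      ext u
      constructor
      · rintro ⟨k, h1, h2, rfl⟩
        exact ⟨k, h1, h2, ⟨0, by omega⟩, by rw [hF]; show _ = f _; rw [hTstep k]⟩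
      · rintro ⟨k, h1, h2, j', rfl⟩
        exact ⟨k, h1, h2, by rw [hF]; show f _ = _; rw [hTstep k]⟩
    rw [hseteq] at H
    exact H
  obtain ⟨mh, Vfam', hProp', g', hle'⟩ := gen d hd W n 1 I ‹Fintype I› φ' a F hf'
  refine ⟨mh, fun t => ⇑SQ ⁻¹' (Vfam' t), ?_, fun t => g' (Fin.cast (one_mul (d^n)).symm t), ?_⟩
  · intro t
    obtain ⟨p, v, hp, hVp⟩ := hProp' t
    refine ⟨p.comap SQ, TQ v, ?_, ?_⟩
    · intro hc
      apply hp
      rw [Submodule.eq_top_iff']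
      intro y
      have hy : TQ y ∈ p.comap SQ := by rw [hc]; trivial
      rw [Submodule.mem_comap, hST] at hy
      exact hy
    · show ⇑SQ ⁻¹' (Vfam' t) = _
      rw [hVp]
      ext y
      simp only [Set.mem_preimage, Set.mem_image, SetLike.mem_coe, Submodule.mem_comap]
      constructor
      · rintro ⟨u, hu, huv⟩
        refine ⟨y - TQ v, ?_, by simp⟩
        have : SQ (y - TQ v) = u := by
          rw [map_sub, hST, ← huv]
          simp
        rw [this]
        exact hu
      · rintro ⟨z, hz, rfl⟩
        exact ⟨SQ z, hz, by rw [map_add, hST]⟩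
  · rw [AddSubgroup.closure_le]
    rintro w ⟨x, hx, hoff, rfl⟩
    have hrange : Set.range (fun t : Fin (d^n) => g' (Fin.cast (one_mul (d^n)).symm t))
        = Set.range g' := by
      ext u
      constructor
      · rintro ⟨t, rfl⟩; exact ⟨_, rfl⟩
      · rintro ⟨t, rfl⟩; exact ⟨Fin.cast (one_mul (d^n)) t, rfl⟩
    rw [hrange]
    set x' : Fin n → ℤ := e.equivFun x with hx'
    have hTx : T x' = x := by rw [hT, hx']; exact e.equivFun.symm_apply_apply _
    have hmem1 : co x' ∈ interior (Vset φ' a) := by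
      rw [hmemint, hTx]
      exact hx
    have hmem2 : ∀ t, co x' ∉ Vfam' t := by
      intro t hc
      apply hoff t
      show co x ∈ ⇑SQ ⁻¹' (Vfam' t)
      rw [Set.mem_preimage, ← hTx, hTco x', hST]
      exact hc
    exact hle' (AddSubgroup.subset_closure
      ⟨x', hmem1, hmem2, ⟨0, by omega⟩, by rw [hF]; show f x = f _; rw [hTx]⟩)
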